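/- arXiv:0904.4862 — 2 statements merged into one kernel-verified Lean document; each statement's English description precedes it below -/
import Mathlib

section
/- For integers n, p ≥ 1 and 0 ≤ k < n−1, 0 ≤ l ≤ p (with all relevant arguments in range), the superadditivity inequality S(n+p, k+l−1) ≤ S(n,k) + S(p,l) holds, where S(m,j) = −Σ_{t=0}^j log(1 − t/m). -/
noncomputable def Tsum (m j : ℕ) : ℝ :=
  ∑ t ∈ Finset.range (j + 1), -Real.log (1 - (t : ℝ) / m)

lemma Tsum_succ (m j : ℕ) :
    Tsum m (j + 1) = Tsum m j + -Real.log (1 - ((j : ℝ) + 1) / m) := by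
  simp [Tsum, Finset.sum_range_succ]; ring

lemma neglog_mono {x y : ℝ} (hxy : x ≤ y) (hy : y < 1) :
    -Real.log (1 - x) ≤ -Real.log (1 - y) := by
  have := Real.log_le_log (by linarith) (show (1:ℝ) - y ≤ 1 - x by linarith)
  linarith

lemma term_nonneg {t m : ℕ} (h : t < m) : 0 ≤ -Real.log (1 - (t : ℝ) / m) := by
  have hm : (0:ℝ) < m := by exact_mod_cast Nat.pos_of_ne_zero (by omega)
  have h1 : (t:ℝ)/m ≤ 1 := by
    rw [div_le_one hm]; exact_mod_cast h.le
  have h2 : (0:ℝ) ≤ (t:ℝ)/m := by positivity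
  have := Real.log_nonpos (by linarith) (by linarith : (1:ℝ) - t/m ≤ 1)
  linarith

lemma aux (n p : ℕ) (hn : 0 < n) (hp : 0 < p) :
    ∀ N k l, k + l ≤ N → k < n → l < p →
      Tsum (n + p) (k + l) ≤ Tsum n k + Tsum p l := by
  have hnR : (0:ℝ) < n := by exact_mod_cast hn
  have hpR : (0:ℝ) < p := by exact_mod_cast hp
  have hnpR : (0:ℝ) < (n:ℝ) + p := by linarith
  -- base termwise comparisons
  have base : ∀ (q r : ℕ), 0 < r → (r:ℝ) ≤ q → ∀ j, j < r → Tsum q j ≤ Tsum r j := by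
    intro q r hr hrq j hj
    apply Finset.sum_le_sum
    intro t ht
    have ht' : t < r := by
      simp only [Finset.mem_range] at ht; omega
    have hrR : (0:ℝ) < r := by exact_mod_cast hr
    have hqR : (0:ℝ) < q := by linarith
    apply neglog_mono
    · apply div_le_div_of_nonneg_left (by positivity) hrR hrq
    · rw [div_lt_one hrR]; exact_mod_cast ht'
  intro N
  induction N with
  | zero =>
    intro k l h hk hl
    have hk0 : k = 0 := by omega
    have hl0 : l = 0 := by omega
    subst hk0; subst hl0
    simp [Tsum]
  | succ N ih =>
    intro k l hN hk hl
    match k, l with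
    | 0, l =>
      have h0 : Tsum n 0 = 0 := by simp [Tsum]
      have := base (n + p) p hp (by push_cast; linarith) l hl
      rw [h0]
      simpa using this
    | k + 1, 0 =>
      have h0 : Tsum p 0 = 0 := by simp [Tsum]
      have := base (n + p) n hn (by push_cast; linarith) (k + 1) hk
      rw [h0]
      simpa using this
    | k + 1, l + 1 =>
      rcases le_or_gt ((l + 1) * n) ((k + 1) * p) with hc | hc
      · -- peel from k side
        have h1 := ih k (l + 1) (by omega) (by omega) hl
        have e1 : k + 1 + (l + 1) = (k + (l + 1)) + 1 := by omega
        rw [e1, Tsum_succ, Tsum_succ]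
        have hterm : -Real.log (1 - ((k : ℝ) + (l + 1) + 1) / (n + p)) ≤
            -Real.log (1 - ((k : ℝ) + 1) / n) := by
          apply neglog_mono
          · rw [div_le_div_iff₀ (by push_cast; linarith) hnR]
            have hcR : ((l:ℝ) + 1) * n ≤ ((k:ℝ) + 1) * p := by exact_mod_cast hc
            nlinarith
          · rw [div_lt_one hnR]; exact_mod_cast hk
        push_cast at hterm ⊢
        linarith
      · -- peel from l side
        have h1 := ih (k + 1) l (by omega) hk (by omega)
        have e1 : k + 1 + (l + 1) = (k + 1 + l) + 1 := by omega
        rw [e1, Tsum_succ]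
        nth_rewrite 2 [Tsum_succ]
        have hterm : -Real.log (1 - ((k : ℝ) + 1 + l + 1) / (n + p)) ≤
            -Real.log (1 - ((l : ℝ) + 1) / p) := by
          apply neglog_mono
          · rw [div_le_div_iff₀ (by push_cast; linarith) hpR]
            have hcR : ((k:ℝ) + 1) * p ≤ ((l:ℝ) + 1) * n := by
              exact_mod_cast hc.le
            nlinarith
          · rw [div_lt_one hpR]; exact_mod_cast hl
        push_cast at hterm ⊢
        linarith

/-- Superadditivity: S(n+p, k+l−1) ≤ S(n,k) + S(p,l). -/
theorem stmt_8 (n p k l : ℕ) (hn : 1 ≤ n) (hp : 1 ≤ p)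
    (hk : k < n) (hl1 : 1 ≤ l) (hl : l < p)
    (S : ℕ → ℕ → ℝ)
    (hS : ∀ m j, S m j = -∑ t ∈ Finset.range (j + 1), Real.log (1 - (t : ℝ) / m)) :
    S (n + p) (k + l - 1) ≤ S n k + S p l := by
  have hT : ∀ m j, S m j = Tsum m j := by
    intro m j
    rw [hS, Tsum, ← Finset.sum_neg_distrib]
  rw [hT, hT, hT]
  obtain ⟨l', rfl⟩ : ∃ l', l = l' + 1 := ⟨l - 1, by omega⟩
  have e : k + (l' + 1) - 1 = k + l' := by omega
  rw [e]
  have h1 := aux n p (by omega) (by omega) (k + l') k l' le_rfl hk (by omega)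
  have h2 : Tsum p l' ≤ Tsum p (l' + 1) := by
    rw [Tsum_succ]
    have := term_nonneg (t := l' + 1) (m := p) (by omega)
    push_cast at this
    linarith
  linarith
end

section
/- For integers n ≥ 1, p ≥ 1, 0 ≤ k ≤ n − 3, and 1 ≤ l ≤ p with k + l ≤ n + p − 1, the ratio h(l) = ∏_{t=1}^k (1 − t/n) · ∏_{t=1}^{l−1} (1 − t/p) / ∏_{t=1}^{k+l} (1 − t/(n+p)) satisfies h(l) ≤ n² / ((n−k−1)(n−k−2)). -/
noncomputable def phi13 (m x : ℝ) : ℝ :=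
  (m - x) * Real.log (m - x) - (m - x) * Real.log m + x

lemma key13 (a b : ℝ) (ha : 0 < a) (hb : 0 < b) :
    a - b ≤ a * (Real.log a - Real.log b) := by
  have h := Real.log_le_sub_one_of_pos (show (0:ℝ) < b / a by positivity)
  rw [Real.log_div (ne_of_gt hb) (ne_of_gt ha)] at h
  have h2 := mul_le_mul_of_nonneg_left h (le_of_lt ha)
  have e : a * (b / a - 1) = b - a := by field_simp
  nlinarith [h2]

lemma phi13_zero (m : ℝ) : phi13 m 0 = 0 := by simp [phi13]

lemma step_up13 (m t : ℝ) (h0 : 0 ≤ t) (h2 : t + 2 ≤ m) :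
    -Real.log (1 - t / m) ≤ phi13 m (t + 1) - phi13 m t := by
  have hm : 0 < m := by linarith
  have hmt : 0 < m - t := by linarith
  have hw : 0 < m - t - 1 := by linarith
  have hfrac : (1 : ℝ) - t / m = (m - t) / m := by field_simp
  rw [hfrac, Real.log_div (ne_of_gt hmt) (ne_of_gt hm)]
  have key := key13 (m - t - 1) (m - t) hw hmt
  have expand : phi13 m (t + 1) - phi13 m t =
      (m - t - 1) * (Real.log (m - t - 1) - Real.log (m - t)) +
        (Real.log m - Real.log (m - t)) + 1 := by
    unfold phi13
    have : m - (t + 1) = m - t - 1 := by ring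
    rw [this]; ring
  rw [expand]; linarith

lemma step_down13 (m t : ℝ) (h1 : 1 ≤ t) (h2 : t + 1 ≤ m) :
    phi13 m t - phi13 m (t - 1) ≤ -Real.log (1 - t / m) := by
  have hm : 0 < m := by linarith
  have hmt : 0 < m - t := by linarith
  have hmt1 : 0 < m - t + 1 := by linarith
  have hfrac : (1 : ℝ) - t / m = (m - t) / m := by field_simp
  rw [hfrac, Real.log_div (ne_of_gt hmt) (ne_of_gt hm)]
  have key := key13 (m - t + 1) (m - t) hmt1 hmt
  have expand : phi13 m t - phi13 m (t - 1) =
      -((m - t + 1) * (Real.log (m - t + 1) - Real.log (m - t))) +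
        (Real.log m - Real.log (m - t)) + 1 := by
    unfold phi13
    have : m - (t - 1) = m - t + 1 := by ring
    rw [this]; ring
  rw [expand]; linarith

lemma sum_le13 (m : ℝ) (j : ℕ) (h : (j : ℝ) + 2 ≤ m) :
    ∑ t ∈ Finset.Icc 1 j, -Real.log (1 - (t : ℝ) / m) ≤ phi13 m ((j : ℝ) + 1) - phi13 m 1 := by
  induction j with
  | zero => simp
  | succ j ih =>
      have hj : (j : ℝ) + 2 ≤ m := by push_cast at h ⊢; linarith
      have ih' := ih hj
      rw [Finset.sum_Icc_succ_top (by omega : 1 ≤ j + 1)]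
      have hstep := step_up13 m ((j : ℝ) + 1) (by positivity) (by push_cast at h ⊢; linarith)
      push_cast
      push_cast at ih' hstep
      linarith

lemma le_sum13 (m : ℝ) (j : ℕ) (h : (j : ℝ) + 1 ≤ m) :
    phi13 m (j : ℝ) ≤ ∑ t ∈ Finset.Icc 1 j, -Real.log (1 - (t : ℝ) / m) := by
  induction j with
  | zero => simp [phi13_zero]
  | succ j ih =>
      have hj : (j : ℝ) + 1 ≤ m := by push_cast at h ⊢; linarith
      have ih' := ih hj
      rw [Finset.sum_Icc_succ_top (by omega : 1 ≤ j + 1)]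
      have hstep := step_down13 m ((j : ℝ) + 1) (by linarith [Nat.cast_nonneg (α := ℝ) j])
        (by push_cast at h ⊢; linarith)
      have : (j : ℝ) + 1 - 1 = (j : ℝ) := by ring
      rw [this] at hstep
      push_cast
      push_cast at ih' hstep
      linarith

lemma core13 (n p a b : ℝ) (hn : 0 < n) (hp : 0 < p) (ha : a + 1 ≤ n) (hb : b + 1 ≤ p) :
    phi13 (n + p) (a + b) ≤ phi13 n a + phi13 p b := by
  have hu : 0 < n - a := by linarith
  have hv : 0 < p - b := by linarith
  have hN : 0 < n + p := by linarith
  have huv : 0 < (n - a) + (p - b) := by linarith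
  have hx : 0 < n * ((n - a) + (p - b)) / (n + p) := by positivity
  have hy : 0 < p * ((n - a) + (p - b)) / (n + p) := by positivity
  have k1 := key13 (n - a) (n * ((n - a) + (p - b)) / (n + p)) hu hx
  have k2 := key13 (p - b) (p * ((n - a) + (p - b)) / (n + p)) hv hy
  have e1 : Real.log (n * ((n - a) + (p - b)) / (n + p)) =
      Real.log n + Real.log ((n - a) + (p - b)) - Real.log (n + p) := by
    rw [Real.log_div (by positivity) (ne_of_gt hN), Real.log_mul (ne_of_gt hn) (ne_of_gt huv)]
  have e2 : Real.log (p * ((n - a) + (p - b)) / (n + p)) =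
      Real.log p + Real.log ((n - a) + (p - b)) - Real.log (n + p) := by
    rw [Real.log_div (by positivity) (ne_of_gt hN), Real.log_mul (ne_of_gt hp) (ne_of_gt huv)]
  rw [e1] at k1
  rw [e2] at k2
  have hsum : ((n - a) - n * ((n - a) + (p - b)) / (n + p)) +
      ((p - b) - p * ((n - a) + (p - b)) / (n + p)) = 0 := by
    field_simp
    ring
  unfold phi13
  have harg : n + p - (a + b) = (n - a) + (p - b) := by ring
  rw [harg]
  nlinarith [k1, k2, hsum]

/-- h(l) ≤ n²/((n−k−1)(n−k−2)). -/
theorem stmt_13 (n p k l : ℕ) (hn : 1 ≤ n) (hp : 1 ≤ p)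
    (hk : k + 3 ≤ n) (hl1 : 1 ≤ l) (hlp : l ≤ p) (hkl : k + l ≤ n + p - 1) :
    (∏ t ∈ Finset.Icc 1 k, (1 - (t : ℝ) / n)) *
        (∏ t ∈ Finset.Icc 1 (l - 1), (1 - (t : ℝ) / p)) /
        (∏ t ∈ Finset.Icc 1 (k + l), (1 - (t : ℝ) / (n + p))) ≤
      (n : ℝ) ^ 2 / (((n : ℝ) - k - 1) * ((n : ℝ) - k - 2)) := by
  have hkR : (k : ℝ) + 3 ≤ (n : ℝ) := by exact_mod_cast hk
  have hlR : (l : ℝ) ≤ (p : ℝ) := by exact_mod_cast hlp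
  have hl1R : (1 : ℝ) ≤ (l : ℝ) := by exact_mod_cast hl1
  have hnR : (0 : ℝ) < n := by positivity
  have hpR : (0 : ℝ) < p := by exact_mod_cast hp
  have hNR : (0 : ℝ) < (n : ℝ) + p := by linarith
  have hcastl : ((l - 1 : ℕ) : ℝ) = (l : ℝ) - 1 := by
    rw [Nat.cast_sub hl1]; norm_num
  -- positivity of factors
  have hAfac : ∀ t ∈ Finset.Icc 1 k, (0:ℝ) < 1 - (t : ℝ) / n := by
    intro t ht
    simp only [Finset.mem_Icc] at ht
    have : (t : ℝ) ≤ k := by exact_mod_cast ht.2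
    rw [sub_pos, div_lt_one hnR]; linarith
  have hA2fac : ∀ t ∈ Finset.Icc 1 (k + 2), (0:ℝ) < 1 - (t : ℝ) / n := by
    intro t ht
    simp only [Finset.mem_Icc] at ht
    have : (t : ℝ) ≤ (k : ℝ) + 2 := by exact_mod_cast ht.2
    rw [sub_pos, div_lt_one hnR]; linarith
  have hBfac : ∀ t ∈ Finset.Icc 1 (l - 1), (0:ℝ) < 1 - (t : ℝ) / p := by
    intro t ht
    simp only [Finset.mem_Icc] at ht
    have : (t : ℝ) ≤ ((l - 1 : ℕ) : ℝ) := by exact_mod_cast ht.2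
    rw [hcastl] at this
    rw [sub_pos, div_lt_one hpR]; linarith
  have hCfac : ∀ t ∈ Finset.Icc 1 (k + l), (0:ℝ) < 1 - (t : ℝ) / ((n : ℝ) + p) := by
    intro t ht
    simp only [Finset.mem_Icc] at ht
    have : (t : ℝ) ≤ (k : ℝ) + l := by exact_mod_cast ht.2
    rw [sub_pos, div_lt_one hNR]; linarith
  set A := ∏ t ∈ Finset.Icc 1 k, (1 - (t : ℝ) / n) with hAdef
  set B := ∏ t ∈ Finset.Icc 1 (l - 1), (1 - (t : ℝ) / p) with hBdef
  set C := ∏ t ∈ Finset.Icc 1 (k + l), (1 - (t : ℝ) / ((n:ℝ) + p)) with hCdef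
  set A2 := ∏ t ∈ Finset.Icc 1 (k + 2), (1 - (t : ℝ) / n) with hA2def
  have hA : 0 < A := Finset.prod_pos hAfac
  have hB : 0 < B := Finset.prod_pos hBfac
  have hC : 0 < C := Finset.prod_pos hCfac
  have hA2 : 0 < A2 := Finset.prod_pos hA2fac
  -- key sum inequality
  have hS1 : ∑ t ∈ Finset.Icc 1 (k + l), -Real.log (1 - (t : ℝ) / ((n:ℝ) + p)) ≤
      phi13 ((n:ℝ) + p) (((k + l : ℕ) : ℝ) + 1) - phi13 ((n:ℝ) + p) 1 :=
    sum_le13 _ _ (by push_cast; linarith)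
  have hphi1 : 0 ≤ phi13 ((n:ℝ) + p) 1 := by
    have := step_up13 ((n:ℝ) + p) 0 le_rfl (by linarith)
    simp [phi13_zero] at this
    linarith
  have hcore : phi13 ((n:ℝ) + p) (((k + l : ℕ) : ℝ) + 1) ≤
      phi13 (n:ℝ) ((k:ℝ) + 2) + phi13 (p:ℝ) ((l:ℝ) - 1) := by
    have harg : ((k + l : ℕ) : ℝ) + 1 = ((k:ℝ) + 2) + ((l:ℝ) - 1) := by push_cast; ring
    rw [harg]
    exact core13 _ _ _ _ hnR hpR (by linarith) (by linarith)
  have hS2 : phi13 (n:ℝ) ((k:ℝ) + 2) ≤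
      ∑ t ∈ Finset.Icc 1 (k + 2), -Real.log (1 - (t : ℝ) / n) := by
    have := le_sum13 (n:ℝ) (k + 2) (by push_cast; linarith)
    push_cast at this ⊢
    exact this
  have hS3 : phi13 (p:ℝ) ((l:ℝ) - 1) ≤
      ∑ t ∈ Finset.Icc 1 (l - 1), -Real.log (1 - (t : ℝ) / p) := by
    have := le_sum13 (p:ℝ) (l - 1) (by rw [hcastl]; linarith)
    rw [hcastl] at this
    exact this
  have hsum : ∑ t ∈ Finset.Icc 1 (k + 2), Real.log (1 - (t : ℝ) / n) +
      ∑ t ∈ Finset.Icc 1 (l - 1), Real.log (1 - (t : ℝ) / p) ≤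
      ∑ t ∈ Finset.Icc 1 (k + l), Real.log (1 - (t : ℝ) / ((n:ℝ) + p)) := by
    have e1 : ∀ (s : Finset ℕ) (f : ℕ → ℝ), ∑ t ∈ s, -f t = -∑ t ∈ s, f t := by
      intro s f; exact Finset.sum_neg_distrib (f := f)
    rw [e1] at hS1 hS2 hS3
    linarith [hS1, hS2, hS3, hcore, hphi1]
  -- product inequality A2 * B ≤ C
  have hprod : A2 * B ≤ C := by
    have hlogA2 : Real.log A2 = ∑ t ∈ Finset.Icc 1 (k + 2), Real.log (1 - (t : ℝ) / n) :=
      Real.log_prod (fun t ht => ne_of_gt (hA2fac t ht))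
    have hlogB : Real.log B = ∑ t ∈ Finset.Icc 1 (l - 1), Real.log (1 - (t : ℝ) / p) :=
      Real.log_prod (fun t ht => ne_of_gt (hBfac t ht))
    have hlogC : Real.log C = ∑ t ∈ Finset.Icc 1 (k + l), Real.log (1 - (t : ℝ) / ((n:ℝ) + p)) :=
      Real.log_prod (fun t ht => ne_of_gt (hCfac t ht))
    have hlog : Real.log (A2 * B) ≤ Real.log C := by
      rw [Real.log_mul (ne_of_gt hA2) (ne_of_gt hB), hlogA2, hlogB, hlogC]
      exact hsum
    exact (Real.log_le_log_iff (by positivity) hC).mp hlog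
  -- expand A2
  have hA2eq : A2 = A * ((((n:ℝ) - k - 1) / n) * (((n:ℝ) - k - 2) / n)) := by
    rw [hA2def, show k + 2 = (k + 1) + 1 from rfl,
      Finset.prod_Icc_succ_top (by omega : 1 ≤ k + 1 + 1),
      Finset.prod_Icc_succ_top (by omega : 1 ≤ k + 1), ← hAdef]
    push_cast
    have hn0 : (n:ℝ) ≠ 0 := ne_of_gt hnR
    field_simp
    ring
  -- final
  have h1 : A * B / C ≤ A * B / (A2 * B) := by
    have hrecip : 1 / C ≤ 1 / (A2 * B) := one_div_le_one_div_of_le (mul_pos hA2 hB) hprod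
    calc A * B / C = A * B * (1 / C) := by ring
      _ ≤ A * B * (1 / (A2 * B)) :=
          mul_le_mul_of_nonneg_left hrecip (by positivity)
      _ = A * B / (A2 * B) := by ring
  have h2 : A * B / (A2 * B) = (n : ℝ) ^ 2 / (((n : ℝ) - k - 1) * ((n : ℝ) - k - 2)) := by
    have h3 : (0:ℝ) < (n:ℝ) - k - 1 := by linarith
    have h4 : (0:ℝ) < (n:ℝ) - k - 2 := by linarith
    have hab : A * B ≠ 0 := mul_ne_zero (ne_of_gt hA) (ne_of_gt hB)
    rw [hA2eq, show A * ((((n:ℝ) - k - 1) / n) * (((n:ℝ) - k - 2) / n)) * B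
        = A * B * ((((n:ℝ) - k - 1) / n) * (((n:ℝ) - k - 2) / n)) from by ring,
      div_mul_eq_div_div, div_self hab]
    field_simp
  calc A * B / C ≤ A * B / (A2 * B) := h1
    _ = _ := h2
end
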